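/- arXiv:2205.07376 — 3 statements merged into one kernel-verified Lean document; each statement's English description precedes it below -/
import Mathlib

section
/- Let g₀ > 0. For all a ∈ (0,1], g ∈ (0, g₀], and d ∈ {2,3,4}, the integral z = ∫_{|X| ≤ (π/g) a^{(d-4)/2}} exp(-2 a^{d-4} g^{-2} (1 - cos(g a^{(4-d)/2} X))) dX satisfies z̃_ℓ ≤ z ≤ z_u where z̃_ℓ = ∫_{|X| ≤ π/g₀} e^{-X²} dX > 0 and z_u = ∫_ℝ exp(-(4/π²) X²) dX = π^{3/2}/2. -/
open Real MeasureTheory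

theorem single_bond_partition_function_bounds
    (g₀ a g : ℝ) (d : ℕ) (hg₀ : 0 < g₀) (ha : a ∈ Set.Ioc (0 : ℝ) 1)
    (hg : g ∈ Set.Ioc (0 : ℝ) g₀) (hd : d ∈ ({2, 3, 4} : Set ℕ)) :
    (0 < ∫ x in Set.Icc (-(π / g₀)) (π / g₀), Real.exp (-x ^ 2)) ∧
    (∫ x in Set.Icc (-(π / g₀)) (π / g₀), Real.exp (-x ^ 2)) ≤
      (∫ x in Set.Icc (-(π / g * a ^ (((d : ℝ) - 4) / 2))) (π / g * a ^ (((d : ℝ) - 4) / 2)),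
        Real.exp (-(2 * a ^ ((d : ℝ) - 4) / g ^ 2) *
          (1 - Real.cos (g * a ^ ((4 - (d : ℝ)) / 2) * x)))) ∧
    (∫ x in Set.Icc (-(π / g * a ^ (((d : ℝ) - 4) / 2))) (π / g * a ^ (((d : ℝ) - 4) / 2)),
        Real.exp (-(2 * a ^ ((d : ℝ) - 4) / g ^ 2) *
          (1 - Real.cos (g * a ^ ((4 - (d : ℝ)) / 2) * x)))) ≤
      (∫ x : ℝ, Real.exp (-(4 / π ^ 2) * x ^ 2)) ∧
    (∫ x : ℝ, Real.exp (-(4 / π ^ 2) * x ^ 2)) = π ^ ((3 : ℝ) / 2) / 2 := by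
  obtain ⟨ha0, ha1⟩ := ha
  obtain ⟨hg0, hgg₀⟩ := hg
  have hd4 : (d : ℝ) ≤ 4 := by
    simp only [Set.mem_insert_iff, Set.mem_singleton_iff] at hd
    rcases hd with rfl | rfl | rfl <;> norm_num
  have ht : (0 : ℝ) ≤ (4 - (d : ℝ)) / 2 := by linarith
  set t : ℝ := (4 - (d : ℝ)) / 2 with ht_def
  have hat : 0 < a ^ t := Real.rpow_pos_of_pos ha0 t
  have hat1 : a ^ t ≤ 1 := Real.rpow_le_one ha0.le ha1 ht
  set c : ℝ := g * a ^ t with hc_def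
  have hc0 : 0 < c := mul_pos hg0 hat
  have hcg₀ : c ≤ g₀ := by
    calc c ≤ g * 1 := by apply mul_le_mul_of_nonneg_left hat1 hg0.le
    _ = g := mul_one g
    _ ≤ g₀ := hgg₀
  -- rewrite the bound
  have hL : π / g * a ^ (((d : ℝ) - 4) / 2) = π / c := by
    have : ((d : ℝ) - 4) / 2 = -t := by rw [ht_def]; ring
    rw [this, Real.rpow_neg ha0.le]
    rw [hc_def]; field_simp
  -- rewrite the coefficient
  have hcoef : 2 * a ^ ((d : ℝ) - 4) / g ^ 2 = 2 / c ^ 2 := by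
    have h1 : (d : ℝ) - 4 = -(t * 2) := by rw [ht_def]; ring
    have h2 : a ^ (t * 2) = (a ^ t) ^ 2 := by
      rw [Real.rpow_mul ha0.le]
      norm_num
    rw [h1, Real.rpow_neg ha0.le, h2, hc_def]
    rw [mul_pow]
    field_simp
  rw [hL, hcoef]
  set f : ℝ → ℝ := fun x => Real.exp (-(2 / c ^ 2) * (1 - Real.cos (c * x))) with hf_def
  have hπg₀ : 0 < π / g₀ := div_pos pi_pos hg₀
  have hLc : π / g₀ ≤ π / c := div_le_div_of_nonneg_left pi_pos.le hc0 hcg₀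
  have hsub : Set.Icc (-(π / g₀)) (π / g₀) ⊆ Set.Icc (-(π / c)) (π / c) :=
    Set.Icc_subset_Icc (by linarith) hLc
  have hfc : Continuous f := by fun_prop
  have hfint : IntegrableOn f (Set.Icc (-(π / c)) (π / c)) := hfc.integrableOn_Icc
  -- pointwise: exp(-x^2) ≤ f x  (all x)
  have hlow : ∀ x : ℝ, Real.exp (-x ^ 2) ≤ f x := by
    intro x
    apply Real.exp_le_exp.mpr
    have h := Real.one_sub_sq_div_two_le_cos (x := c * x)
    have hle : (2 / c ^ 2) * (1 - Real.cos (c * x)) ≤ x ^ 2 := by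
      have h2 : 1 - Real.cos (c * x) ≤ (c * x) ^ 2 / 2 := by linarith
      calc (2 / c ^ 2) * (1 - Real.cos (c * x)) ≤ (2 / c ^ 2) * ((c * x) ^ 2 / 2) := by
            apply mul_le_mul_of_nonneg_left h2 (by positivity)
        _ = x ^ 2 := by field_simp
    linarith
  -- pointwise on [-π/c, π/c] : f x ≤ exp(-(4/π²) x²)
  have hup : ∀ x ∈ Set.Icc (-(π / c)) (π / c), f x ≤ Real.exp (-(4 / π ^ 2) * x ^ 2) := by
    intro x hx
    apply Real.exp_le_exp.mpr
    have hxabs : |c * x| ≤ π := by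
      rw [abs_mul, abs_of_pos hc0]
      rw [Set.mem_Icc] at hx
      have : |x| ≤ π / c := abs_le.mpr hx
      calc c * |x| ≤ c * (π / c) := mul_le_mul_of_nonneg_left this hc0.le
        _ = π := by field_simp
    have h := Real.cos_le_one_sub_mul_cos_sq hxabs
    have h2 : 2 / π ^ 2 * (c * x) ^ 2 ≤ 1 - Real.cos (c * x) := by linarith
    have hle : (4 / π ^ 2) * x ^ 2 ≤ (2 / c ^ 2) * (1 - Real.cos (c * x)) := by
      calc (4 / π ^ 2) * x ^ 2 = (2 / c ^ 2) * (2 / π ^ 2 * (c * x) ^ 2) := by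
            field_simp; ring
        _ ≤ (2 / c ^ 2) * (1 - Real.cos (c * x)) := by
            apply mul_le_mul_of_nonneg_left h2 (by positivity)
    linarith
  refine ⟨?_, ?_, ?_, ?_⟩
  · -- positivity
    rw [MeasureTheory.integral_Icc_eq_integral_Ioc,
      ← intervalIntegral.integral_of_le (by linarith : -(π / g₀) ≤ π / g₀)]
    exact intervalIntegral.intervalIntegral_pos_of_pos
      (Continuous.intervalIntegrable (by fun_prop) _ _) (fun x => Real.exp_pos _) (by linarith)
  · -- lower bound ≤ z
    calc (∫ x in Set.Icc (-(π / g₀)) (π / g₀), Real.exp (-x ^ 2))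
        ≤ ∫ x in Set.Icc (-(π / g₀)) (π / g₀), f x := by
          apply setIntegral_mono_on
          · exact (Continuous.integrableOn_Icc (by continuity))
          · exact hfint.mono_set hsub
          · exact measurableSet_Icc
          · intro x _; exact hlow x
      _ ≤ ∫ x in Set.Icc (-(π / c)) (π / c), f x := by
          apply setIntegral_mono_set hfint
          · filter_upwards with x using (Real.exp_pos _).le
          · exact Filter.Eventually.of_forall hsub
  · -- z ≤ full gaussian
    have hgauss : Integrable (fun x : ℝ => Real.exp (-(4 / π ^ 2) * x ^ 2)) := by
      apply integrable_exp_neg_mul_sq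
      positivity
    calc (∫ x in Set.Icc (-(π / c)) (π / c), f x)
        ≤ ∫ x in Set.Icc (-(π / c)) (π / c), Real.exp (-(4 / π ^ 2) * x ^ 2) := by
          apply setIntegral_mono_on hfint (hgauss.integrableOn) measurableSet_Icc hup
      _ ≤ ∫ x : ℝ, Real.exp (-(4 / π ^ 2) * x ^ 2) := by
          apply setIntegral_le_integral hgauss
          filter_upwards with x using (Real.exp_pos _).le
  · rw [integral_gaussian]
    have h1 : π / (4 / π ^ 2) = π ^ 3 / 4 := by
      field_simp
    rw [h1, Real.sqrt_div (by positivity) 4,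
      show √(4:ℝ) = 2 by rw [show (4:ℝ) = 2 ^ 2 by norm_num, Real.sqrt_sq (by norm_num : (0:ℝ) ≤ 2)],
      Real.sqrt_eq_rpow, ← Real.rpow_natCast π 3, ← Real.rpow_mul pi_pos.le]
    norm_num
end

section
/- For N ≥ 1 and β = 2, the function I₂(u) = ∫_{(-u,u)^N} exp(-Σⱼ yⱼ²) Π_{j<k}(yⱼ - y_k)² d^N y is monotone increasing in u > 0, and I₂(u) ≤ I₂(∞) = (2π)^{N/2} 2^{-N²/2} Π_{j=1}^{N} j!. -/
open Real MeasureTheory Finset Polynomial Filter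

namespace GUEaux

noncomputable def w (x : ℝ) : ℝ := Real.exp (-(x ^ 2 / 2))

noncomputable def Hp (n : ℕ) : Polynomial ℝ := (Polynomial.hermite n).map (Int.castRingHom ℝ)

lemma Hp_zero : Hp 0 = 1 := by simp [Hp, hermite_zero]

lemma Hp_succ (n : ℕ) : Hp (n + 1) = X * Hp n - derivative (Hp n) := by
  simp [Hp, hermite_succ, Polynomial.derivative_map]

lemma Hp_monic (n : ℕ) : (Hp n).Monic := (hermite_monic n).map _

lemma natDegree_Hp (n : ℕ) : (Hp n).natDegree = n := by
  rw [Hp, (hermite_monic n).natDegree_map, natDegree_hermite]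

lemma coeff_Hp_of_lt {n k : ℕ} (h : n < k) : (Hp n).coeff k = 0 := by
  simp [Hp, coeff_hermite_of_lt h]

lemma coeff_Hp_self (n : ℕ) : (Hp n).coeff n = 1 := by
  simp [Hp, coeff_hermite_self]

lemma derivative_Hp_aux : ∀ n : ℕ,
    derivative (Hp n) = C (n : ℝ) * Hp (n - 1) ∧
      derivative (Hp (n + 1)) = C ((n : ℝ) + 1) * Hp n := by
  intro n
  induction n with
  | zero =>
    constructor
    · simp [Hp_zero]
    · have : Hp 1 = X := by
        rw [Hp_succ, Hp_zero]; simp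
      rw [this]; simp [Hp_zero]
  | succ n ih =>
    obtain ⟨h1, h2⟩ := ih
    refine ⟨by simpa using h2, ?_⟩
    rw [Hp_succ (n + 1), h2, derivative_sub, derivative_mul, derivative_X, one_mul, h2,
      derivative_mul, h1, Hp_succ n, h1]
    push_cast
    simp only [C_add, C_1, derivative_add, derivative_one, derivative_C, map_ofNat]
    ring
  
lemma derivative_Hp (n : ℕ) : derivative (Hp (n + 1)) = C ((n : ℝ) + 1) * Hp n :=
  (derivative_Hp_aux n).2

lemma w_pos (x : ℝ) : 0 < w x := Real.exp_pos _

lemma w_eq (x : ℝ) : w x = Real.exp (-(1/2 : ℝ) * x ^ 2) := by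
  unfold w; ring_nf

lemma integrable_pow_w (k : ℕ) : Integrable (fun x : ℝ => x ^ k * w x) := by
  have h := integrable_rpow_mul_exp_neg_mul_sq (b := 1/2) (by norm_num)
    (s := (k : ℝ)) (neg_one_lt_zero.trans_le (Nat.cast_nonneg k))
  simp only [Real.rpow_natCast] at h
  refine h.congr ?_
  filter_upwards with x
  rw [w_eq]

lemma integrable_poly_w (q : Polynomial ℝ) : Integrable (fun x : ℝ => q.eval x * w x) := by
  have : (fun x : ℝ => q.eval x * w x) =
      fun x => ∑ k ∈ Finset.range (q.natDegree + 1), q.coeff k * (x ^ k * w x) := by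
    funext x
    rw [Polynomial.eval_eq_sum_range, Finset.sum_mul]
    simp [mul_assoc]
  rw [this]
  exact integrable_finset_sum _ (fun k _ => (integrable_pow_w k).const_mul _)

lemma tendsto_pow_w_atTop (k : ℕ) :
    Tendsto (fun x : ℝ => x ^ k * w x) atTop (nhds 0) := by
  have hg : Tendsto (fun x : ℝ => x ^ k * Real.exp (-x)) atTop (nhds 0) :=
    Real.tendsto_pow_mul_exp_neg_atTop_nhds_zero k
  apply squeeze_zero' ?_ ?_ hg
  · filter_upwards [eventually_ge_atTop (0:ℝ)] with x hx
    exact mul_nonneg (pow_nonneg hx k) (w_pos x).le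
  · filter_upwards [eventually_ge_atTop (2:ℝ)] with x hx
    have h1 : w x ≤ Real.exp (-x) := by
      apply Real.exp_le_exp.2
      nlinarith
    have h2 : (0:ℝ) ≤ x ^ k := by positivity
    exact mul_le_mul_of_nonneg_left h1 h2

lemma tendsto_poly_w_atTop (q : Polynomial ℝ) :
    Tendsto (fun x : ℝ => q.eval x * w x) atTop (nhds 0) := by
  have : (fun x : ℝ => q.eval x * w x) =
      fun x => ∑ k ∈ Finset.range (q.natDegree + 1), q.coeff k * (x ^ k * w x) := by
    funext x
    rw [Polynomial.eval_eq_sum_range, Finset.sum_mul]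
    simp [mul_assoc]
  rw [this]
  have : (0:ℝ) = ∑ k ∈ Finset.range (q.natDegree + 1), q.coeff k * 0 := by simp
  rw [this]
  exact tendsto_finset_sum _ (fun k _ => (tendsto_pow_w_atTop k).const_mul _)

lemma tendsto_poly_w_atBot (q : Polynomial ℝ) :
    Tendsto (fun x : ℝ => q.eval x * w x) atBot (nhds 0) := by
  have h := (tendsto_poly_w_atTop (q.comp (-X))).comp tendsto_neg_atBot_atTop
  refine h.congr ?_
  intro x
  simp only [Function.comp_apply, Polynomial.eval_comp, Polynomial.eval_neg, Polynomial.eval_X,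
    neg_neg]
  unfold w
  rw [neg_sq]

lemma hasDerivAt_w (x : ℝ) : HasDerivAt w (-x * w x) x := by
  have h1 : HasDerivAt (fun x : ℝ => -(x ^ 2 / 2)) (-x) x := by
    have := ((hasDerivAt_pow 2 x).div_const 2).neg
    refine this.congr_deriv ?_
    push_cast; ring
  have := h1.exp
  unfold w
  convert this using 1
  ring

lemma hasDerivAt_HpW (n : ℕ) (x : ℝ) :
    HasDerivAt (fun t => (Hp n).eval t * w t) (-((Hp (n+1)).eval x * w x)) x := by
  have h := ((Hp n).hasDerivAt x).mul (hasDerivAt_w x)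
  refine h.congr_deriv ?_
  rw [Hp_succ]
  simp only [eval_sub, eval_mul, eval_X]
  ring

lemma integral_deriv_eq_zero {g g' : ℝ → ℝ} (h : ∀ x, HasDerivAt g (g' x) x)
    (hint : Integrable g') (ht : Tendsto g atTop (nhds 0))
    (hb : Tendsto g atBot (nhds 0)) : ∫ x, g' x = 0 := by
  have hIoi : ∫ x in Set.Ioi (0:ℝ), g' x = 0 - g 0 :=
    integral_Ioi_of_hasDerivAt_of_tendsto' (fun x _ => h x) hint.integrableOn ht
  have hIic : ∫ x in Set.Iic (0:ℝ), g' x = g 0 - 0 :=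
    integral_Iic_of_hasDerivAt_of_tendsto' (fun x _ => h x) hint.integrableOn hb
  have hsplit := intervalIntegral.integral_Iic_add_Ioi (b := (0:ℝ)) (f := g') (μ := volume)
    hint.integrableOn hint.integrableOn
  rw [← hsplit, hIoi, hIic]
  ring

lemma integrable_polyprod_w (p q : Polynomial ℝ) :
    Integrable (fun x => p.eval x * (q.eval x * w x)) := by
  refine (integrable_poly_w (p * q)).congr ?_
  filter_upwards with x
  rw [eval_mul]; ring

lemma parts (q : Polynomial ℝ) (n : ℕ) :
    ∫ x, q.eval x * ((Hp (n+1)).eval x * w x) =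
      ∫ x, (derivative q).eval x * ((Hp n).eval x * w x) := by
  set g : ℝ → ℝ := fun t => q.eval t * ((Hp n).eval t * w t) with hg
  have hder : ∀ x, HasDerivAt g
      ((derivative q).eval x * ((Hp n).eval x * w x)
        - q.eval x * ((Hp (n+1)).eval x * w x)) x := by
    intro x
    have h := (q.hasDerivAt x).mul (hasDerivAt_HpW n x)
    refine h.congr_deriv ?_
    ring
  have int1 := integrable_polyprod_w (derivative q) (Hp n)
  have int2 := integrable_polyprod_w q (Hp (n+1))
  have hgp : g = fun t => (q * Hp n).eval t * w t := by
    funext t; rw [eval_mul]; ring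
  have h0 : ∫ x, ((derivative q).eval x * ((Hp n).eval x * w x)
      - q.eval x * ((Hp (n+1)).eval x * w x)) = 0 := by
    refine integral_deriv_eq_zero hder (int1.sub int2) ?_ ?_
    · rw [hgp]; exact tendsto_poly_w_atTop _
    · rw [hgp]; exact tendsto_poly_w_atBot _
  rw [integral_sub int1 int2] at h0
  linarith

noncomputable def T (m n : ℕ) : ℝ := ∫ x, (Hp m).eval x * ((Hp n).eval x * w x)

lemma T_symm (m n : ℕ) : T m n = T n m := by
  unfold T
  congr 1; funext x; ring

lemma T_succ (m n : ℕ) : T m (n+1) = (m : ℝ) * T (m-1) n := by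
  unfold T
  rw [parts (Hp m) n]
  cases m with
  | zero =>
    simp [Hp_zero]
  | succ m =>
    simp only [Nat.add_sub_cancel]
    rw [derivative_Hp m]
    rw [show ((m+1:ℕ) : ℝ) = (m : ℝ) + 1 by push_cast; ring]
    rw [← integral_const_mul]
    congr 1; funext x
    rw [eval_mul, eval_C]
    ring

lemma T_zero_zero : T 0 0 = Real.sqrt (2 * π) := by
  unfold T
  rw [show (∫ x, (Hp 0).eval x * ((Hp 0).eval x * w x)) = ∫ x, Real.exp (-(1/2:ℝ) * x ^ 2) by
    congr 1; funext x; rw [Hp_zero, ← w_eq]; simp]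
  rw [integral_gaussian]
  congr 1
  ring

lemma orth : ∀ n m : ℕ, T m n = if m = n then (m.factorial : ℝ) * Real.sqrt (2 * π) else 0 := by
  intro n
  induction n with
  | zero =>
    intro m
    cases m with
    | zero => simpa using T_zero_zero
    | succ m =>
      rw [T_symm, T_succ]
      simp
  | succ n ih =>
    intro m
    cases m with
    | zero =>
      rw [T_succ]
      simp
    | succ m =>
      rw [T_succ, Nat.add_sub_cancel, ih m]
      by_cases h : m = n
      · subst h
        rw [if_pos rfl, if_pos rfl]
        rw [Nat.factorial_succ]
        push_cast
        ring
      · rw [if_neg h, if_neg (by omega)]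
        ring

noncomputable def A (N : ℕ) (x : Fin N → ℝ) : Matrix (Fin N) (Fin N) ℝ :=
  Matrix.of fun i j : Fin N => (Hp (j : ℕ)).eval (x i)

lemma detA (N : ℕ) (x : Fin N → ℝ) : (A N x).det = (Matrix.vandermonde x).det :=
  (Matrix.det_eval_matrixOfPolynomials_eq_det_vandermonde x (fun j => Hp (j : ℕ))
    (fun j => natDegree_Hp _) (fun j => Hp_monic _)).symm

lemma detA_expand (N : ℕ) (x : Fin N → ℝ) :
    (A N x).det = ∑ σ : Equiv.Perm (Fin N),
      ((Equiv.Perm.sign σ : ℤ) : ℝ) * ∏ i, (Hp ((σ i : Fin N) : ℕ)).eval (x i) := by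
  rw [← Matrix.det_transpose, Matrix.det_apply']
  rfl

lemma pairProd {M : Type*} [CommMonoid M] {N : ℕ} (f : Fin N → Fin N → M) :
    ∏ p ∈ Finset.univ.filter (fun p : Fin N × Fin N => p.1 < p.2), f p.1 p.2
      = ∏ i, ∏ j ∈ Finset.Ioi i, f i j := by
  rw [Finset.prod_sigma']
  refine Finset.prod_nbij' (fun p => (⟨p.1, p.2⟩ : Σ _ : Fin N, Fin N)) (fun x => (x.1, x.2))
    ?_ ?_ ?_ ?_ ?_
  · intro p hp
    simp only [Finset.mem_filter, Finset.mem_univ, true_and] at hp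
    simp [Finset.mem_sigma, Finset.mem_Ioi, hp]
  · intro a ha
    simp only [Finset.mem_sigma, Finset.mem_univ, Finset.mem_Ioi, true_and] at ha
    simp [ha]
  · intro a _; rfl
  · intro p _; rfl
  · intro a _; rfl

lemma card_pairs (N : ℕ) :
    2 * (Finset.univ.filter (fun p : Fin N × Fin N => p.1 < p.2)).card + N = N * N := by
  have h1 : (2 : ℕ) ^ (Finset.univ.filter (fun p : Fin N × Fin N => p.1 < p.2)).card
      = 2 ^ (∑ i : Fin N, (N - 1 - (i : ℕ))) := by
    calc (2:ℕ) ^ _ = ∏ p ∈ Finset.univ.filter (fun p : Fin N × Fin N => p.1 < p.2), 2 := by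
          rw [Finset.prod_const]
      _ = ∏ i : Fin N, ∏ j ∈ Finset.Ioi i, 2 := pairProd (fun _ _ => (2:ℕ))
      _ = ∏ i : Fin N, 2 ^ (N - 1 - (i : ℕ)) := by
          refine Finset.prod_congr rfl fun i _ => ?_
          rw [Finset.prod_const, Fin.card_Ioi]
      _ = 2 ^ (∑ i : Fin N, (N - 1 - (i : ℕ))) := by rw [Finset.prod_pow_eq_pow_sum]
  have h2 := Nat.pow_right_injective (le_refl 2) h1
  have h3 : ∑ i : Fin N, (N - 1 - (i : ℕ)) = ∑ j ∈ Finset.range N, (N - 1 - j) :=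
    Fin.sum_univ_eq_sum_range _ N
  have h4 : ∑ j ∈ Finset.range N, (N - 1 - j) = ∑ j ∈ Finset.range N, j :=
    Finset.sum_range_reflect id N
  have h5 := Finset.sum_range_id_mul_two N
  rw [h2, h3, h4]
  cases N with
  | zero => simp
  | succ n =>
    rw [show (n+1) * (n+1-1) = (n+1) * n from rfl] at h5
    have h6 : (n+1) * n + (n+1) = (n+1) * (n+1) := by ring
    omega


noncomputable def csgn {N : ℕ} (sigma : Equiv.Perm (Fin N)) : ℝ :=
  ((Equiv.Perm.sign sigma : ℤ) : ℝ)

lemma term_integrable {N : ℕ} (sigma tau : Equiv.Perm (Fin N)) :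
    Integrable (fun x : Fin N → ℝ =>
      ∏ j, ((Hp ((sigma j : Fin N) : ℕ)).eval (x j) *
        ((Hp ((tau j : Fin N) : ℕ)).eval (x j) * w (x j)))) :=
  Integrable.fintype_prod (f := fun j t => (Hp ((sigma j : Fin N) : ℕ)).eval t *
    ((Hp ((tau j : Fin N) : ℕ)).eval t * w t)) (fun j => integrable_polyprod_w _ _)

lemma expand_eq (N : ℕ) : (fun x : Fin N → ℝ => (∏ i, w (x i)) * ((A N x).det) ^ 2) =
      fun x => ∑ sigma : Equiv.Perm (Fin N), ∑ tau : Equiv.Perm (Fin N),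
        csgn sigma * csgn tau *
          ∏ j, ((Hp ((sigma j : Fin N) : ℕ)).eval (x j) *
            ((Hp ((tau j : Fin N) : ℕ)).eval (x j) * w (x j))) := by
    funext x
    rw [detA_expand, sq, Finset.sum_mul_sum, Finset.mul_sum]
    refine Finset.sum_congr rfl fun sigma _ => ?_
    rw [Finset.mul_sum]
    refine Finset.sum_congr rfl fun tau _ => ?_
    rw [show (∏ j, ((Hp ((sigma j : Fin N) : ℕ)).eval (x j) *
        ((Hp ((tau j : Fin N) : ℕ)).eval (x j) * w (x j))))
      = (∏ j, (Hp ((sigma j : Fin N) : ℕ)).eval (x j)) *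
        ((∏ j, (Hp ((tau j : Fin N) : ℕ)).eval (x j)) * (∏ j, w (x j))) by
        rw [Finset.prod_mul_distrib, Finset.prod_mul_distrib]]
    unfold csgn
    ring

lemma G_integrable (N : ℕ) :
    Integrable (fun x : Fin N → ℝ => (∏ i, w (x i)) * ((A N x).det) ^ 2) := by
  rw [expand_eq]
  exact integrable_finset_sum _ (fun sigma _ => integrable_finset_sum _
    (fun tau _ => (term_integrable sigma tau).const_mul _))

lemma Mval (N : ℕ) :
    ∫ x : Fin N → ℝ, (∏ i, w (x i)) * ((A N x).det) ^ 2
      = (N.factorial : ℝ) * ∏ i : Fin N, (((i : ℕ).factorial : ℝ) * Real.sqrt (2 * π)) := by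
  rw [show (fun x : Fin N → ℝ => (∏ i, w (x i)) * ((A N x).det) ^ 2)
    = _ from expand_eq N]
  rw [integral_finset_sum _ (fun sigma _ => integrable_finset_sum _
    (fun tau _ => (term_integrable sigma tau).const_mul _))]
  have step : ∀ sigma : Equiv.Perm (Fin N),
      (∫ x : Fin N → ℝ, ∑ tau : Equiv.Perm (Fin N), csgn sigma * csgn tau *
        ∏ j, ((Hp ((sigma j : Fin N) : ℕ)).eval (x j) *
          ((Hp ((tau j : Fin N) : ℕ)).eval (x j) * w (x j))))
      = ∏ i : Fin N, (((i : ℕ).factorial : ℝ) * Real.sqrt (2 * π)) := by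
    intro sigma
    rw [integral_finset_sum _ (fun tau _ => (term_integrable sigma tau).const_mul _)]
    have eachint : ∀ tau : Equiv.Perm (Fin N),
        (∫ x : Fin N → ℝ, csgn sigma * csgn tau *
          ∏ j, ((Hp ((sigma j : Fin N) : ℕ)).eval (x j) *
            ((Hp ((tau j : Fin N) : ℕ)).eval (x j) * w (x j))))
        = csgn sigma * csgn tau * ∏ j : Fin N, T ((sigma j : Fin N) : ℕ) ((tau j : Fin N) : ℕ) := by
      intro tau
      rw [integral_const_mul]
      congr 1
      exact integral_fintype_prod_eq_prod
        (fun j t => (Hp ((sigma j : Fin N) : ℕ)).eval t *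
          ((Hp ((tau j : Fin N) : ℕ)).eval t * w t))
    rw [Finset.sum_congr rfl (fun tau _ => eachint tau)]
    rw [Finset.sum_eq_single sigma]
    · have hsq : csgn sigma * csgn sigma = 1 := by
        unfold csgn
        rcases Int.units_eq_one_or (Equiv.Perm.sign sigma) with h | h <;> rw [h] <;> norm_num
      rw [hsq, one_mul]
      have hdiag : ∀ j : Fin N, T ((sigma j : Fin N) : ℕ) ((sigma j : Fin N) : ℕ)
          = ((((sigma j : Fin N) : ℕ).factorial : ℝ) * Real.sqrt (2 * π)) := by
        intro j
        rw [orth, if_pos rfl]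
      rw [Finset.prod_congr rfl (fun j _ => hdiag j)]
      exact Equiv.prod_comp sigma (fun j : Fin N => (((j : ℕ).factorial : ℝ) * Real.sqrt (2 * π)))
    · intro tau _ hne
      have : ∃ j : Fin N, sigma j ≠ tau j := by
        by_contra hc
        push_neg at hc
        exact hne (Equiv.ext hc).symm
      obtain ⟨j, hj⟩ := this
      rw [Finset.prod_eq_zero (Finset.mem_univ j), mul_zero]
      rw [orth, if_neg]
      exact fun hv => hj (Fin.val_injective hv)
    · intro h
      exact absurd (Finset.mem_univ sigma) h
  rw [Finset.sum_congr rfl (fun sigma _ => step sigma), Finset.sum_const, Finset.card_univ,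
    Fintype.card_perm, Fintype.card_fin, nsmul_eq_mul]

lemma detsq (N : ℕ) (x : Fin N → ℝ) :
    ((A N x).det) ^ 2
      = ∏ p ∈ Finset.univ.filter (fun p : Fin N × Fin N => p.1 < p.2), (x p.1 - x p.2) ^ 2 := by
  rw [detA, Matrix.det_vandermonde]
  rw [pairProd (fun i j : Fin N => (x i - x j) ^ 2)]
  rw [← Finset.prod_pow]
  refine Finset.prod_congr rfl fun i _ => ?_
  rw [← Finset.prod_pow]
  refine Finset.prod_congr rfl fun j _ => ?_
  ring

lemma scale_eq (N : ℕ) (y : Fin N → ℝ) :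
    (∏ i, w ((Real.sqrt 2 • y) i)) * ((A N (Real.sqrt 2 • y)).det) ^ 2
      = (2 : ℝ) ^ (Finset.univ.filter (fun p : Fin N × Fin N => p.1 < p.2)).card *
        (Real.exp (-∑ j, y j ^ 2) *
          ∏ p ∈ Finset.univ.filter (fun p : Fin N × Fin N => p.1 < p.2), (y p.1 - y p.2) ^ 2) := by
  have hw : (∏ i, w ((Real.sqrt 2 • y) i)) = Real.exp (-∑ j, y j ^ 2) := by
    have h1 : ∀ i, w ((Real.sqrt 2 • y) i) = Real.exp (-(y i ^ 2)) := by
      intro i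
      simp only [Pi.smul_apply, smul_eq_mul]
      unfold w
      congr 1
      rw [mul_pow, Real.sq_sqrt (by norm_num : (0:ℝ) ≤ 2)]
      ring
    rw [Finset.prod_congr rfl (fun i _ => h1 i), ← Real.exp_sum]
    congr 1
    rw [← Finset.sum_neg_distrib]
  have hd : ((A N (Real.sqrt 2 • y)).det) ^ 2
      = (2 : ℝ) ^ (Finset.univ.filter (fun p : Fin N × Fin N => p.1 < p.2)).card *
        ∏ p ∈ Finset.univ.filter (fun p : Fin N × Fin N => p.1 < p.2), (y p.1 - y p.2) ^ 2 := by
    rw [detsq]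
    have h2 : ∀ p : Fin N × Fin N,
        ((Real.sqrt 2 • y) p.1 - (Real.sqrt 2 • y) p.2) ^ 2 = 2 * (y p.1 - y p.2) ^ 2 := by
      intro p
      simp only [Pi.smul_apply, smul_eq_mul]
      rw [← mul_sub, mul_pow, Real.sq_sqrt (by norm_num : (0:ℝ) ≤ 2)]
    rw [Finset.prod_congr rfl (fun p _ => h2 p), Finset.prod_mul_distrib, Finset.prod_const]
  rw [hw, hd]
  ring

lemma F_integrable (N : ℕ) :
    Integrable (fun y : Fin N → ℝ => Real.exp (-∑ j, y j ^ 2) *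
      ∏ p ∈ Finset.univ.filter (fun p : Fin N × Fin N => p.1 < p.2), (y p.1 - y p.2) ^ 2) := by
  set K := (Finset.univ.filter (fun p : Fin N × Fin N => p.1 < p.2)).card with hK
  have h2K : (0:ℝ) < 2 ^ K := by positivity
  have hcomp : Integrable (fun y : Fin N → ℝ =>
      (∏ i, w ((Real.sqrt 2 • y) i)) * ((A N (Real.sqrt 2 • y)).det) ^ 2) :=
    (G_integrable N).comp_smul (by positivity : Real.sqrt 2 ≠ 0)
  have := (hcomp.const_mul ((2:ℝ)^K)⁻¹)
  refine this.congr ?_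
  filter_upwards with y
  rw [scale_eq]
  field_simp
  rw [hK]

lemma F_nonneg (N : ℕ) (y : Fin N → ℝ) :
    0 ≤ Real.exp (-∑ j, y j ^ 2) *
      ∏ p ∈ Finset.univ.filter (fun p : Fin N × Fin N => p.1 < p.2), (y p.1 - y p.2) ^ 2 :=
  mul_nonneg (Real.exp_pos _).le (Finset.prod_nonneg fun p _ => sq_nonneg _)

lemma fact_prod_nat : ∀ N : ℕ, ∏ j ∈ Finset.Icc 1 N, j.factorial
    = N.factorial * ∏ j ∈ Finset.range N, j.factorial := by
  intro N
  induction N with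
  | zero => simp
  | succ n ih =>
    rw [Finset.prod_range_succ, ← Finset.insert_Icc_right_eq_Icc_add_one (by omega),
      Finset.prod_insert (by simp), ih, Nat.factorial_succ]
    ring

lemma F_integral (N : ℕ) (hN : 1 ≤ N) :
    (∫ y : Fin N → ℝ, Real.exp (-∑ j, y j ^ 2) *
        ∏ p ∈ Finset.univ.filter (fun p : Fin N × Fin N => p.1 < p.2), (y p.1 - y p.2) ^ 2)
      = (2 * π) ^ ((N : ℝ) / 2) * (2 : ℝ) ^ (-((N : ℝ) ^ 2) / 2) *
        ∏ j ∈ Finset.Icc 1 N, (Nat.factorial j : ℝ) := by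
  set K := (Finset.univ.filter (fun p : Fin N × Fin N => p.1 < p.2)).card with hK
  have h2K : (0:ℝ) < 2 ^ K := by positivity
  have step1 : (∫ y : Fin N → ℝ, Real.exp (-∑ j, y j ^ 2) *
        ∏ p ∈ Finset.univ.filter (fun p : Fin N × Fin N => p.1 < p.2), (y p.1 - y p.2) ^ 2)
      = ((2:ℝ)^K)⁻¹ * ∫ y : Fin N → ℝ,
          (∏ i, w ((Real.sqrt 2 • y) i)) * ((A N (Real.sqrt 2 • y)).det) ^ 2 := by
    rw [← integral_const_mul]
    congr 1
    funext y
    rw [scale_eq]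
    field_simp
    rw [hK]
  have step2 : (∫ y : Fin N → ℝ,
        (∏ i, w ((Real.sqrt 2 • y) i)) * ((A N (Real.sqrt 2 • y)).det) ^ 2)
      = ((Real.sqrt 2) ^ N)⁻¹ * ∫ x : Fin N → ℝ, (∏ i, w (x i)) * ((A N x).det) ^ 2 := by
    have h := MeasureTheory.Measure.integral_comp_smul (μ := volume)
      (f := fun x : Fin N → ℝ => (∏ i, w (x i)) * ((A N x).det) ^ 2) (Real.sqrt 2)
    rw [h, Module.finrank_fintype_fun_eq_card, Fintype.card_fin, smul_eq_mul, abs_of_nonneg]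
    positivity
  rw [step1, step2, Mval]
  -- now pure arithmetic
  have hcard := card_pairs N
  have hfact : ∏ i : Fin N, (((i : ℕ).factorial : ℝ) * Real.sqrt (2 * π))
      = (∏ j ∈ Finset.range N, (j.factorial : ℝ)) * Real.sqrt (2 * π) ^ N := by
    rw [Finset.prod_mul_distrib, Finset.prod_const, Finset.card_univ, Fintype.card_fin]
    congr 1
    exact Fin.prod_univ_eq_prod_range (fun j => ((j.factorial : ℕ) : ℝ)) N
  rw [hfact]
  have hprod : (N.factorial : ℝ) * ∏ j ∈ Finset.range N, (j.factorial : ℝ)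
      = ∏ j ∈ Finset.Icc 1 N, (Nat.factorial j : ℝ) := by
    rw [← Nat.cast_prod, ← Nat.cast_prod, ← Nat.cast_mul, fact_prod_nat]
  have h2pi : (0:ℝ) ≤ 2 * π := by positivity
  have hsqrtpow : Real.sqrt (2 * π) ^ N = (2 * π) ^ ((N : ℝ) / 2) := by
    rw [Real.sqrt_eq_rpow, ← Real.rpow_natCast ((2*π) ^ ((1:ℝ)/2)) N, ← Real.rpow_mul h2pi]
    congr 1
    ring
  have hsqrt2pow : (Real.sqrt 2) ^ N = (2:ℝ) ^ ((N : ℝ) / 2) := by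
    rw [Real.sqrt_eq_rpow, ← Real.rpow_natCast ((2:ℝ) ^ ((1:ℝ)/2)) N,
      ← Real.rpow_mul (by norm_num : (0:ℝ) ≤ 2)]
    congr 1
    ring
  have h2Krpow : (2:ℝ) ^ K = (2:ℝ) ^ ((K : ℝ)) := (Real.rpow_natCast 2 K).symm
  have hpow2 : ((2:ℝ)^K)⁻¹ * ((Real.sqrt 2 ^ N)⁻¹) = (2:ℝ) ^ (-((N : ℝ) ^ 2) / 2) := by
    rw [hsqrt2pow, h2Krpow, ← Real.rpow_neg (by norm_num : (0:ℝ) ≤ 2),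
      ← Real.rpow_neg (by norm_num : (0:ℝ) ≤ 2),
      ← Real.rpow_add (by norm_num : (0:ℝ) < 2)]
    congr 1
    have : ((2 * K + N : ℕ) : ℝ) = ((N * N : ℕ) : ℝ) := by rw [hcard]
    push_cast at this
    nlinarith [this]
  calc ((2:ℝ)^K)⁻¹ * ((Real.sqrt 2 ^ N)⁻¹ * ((N.factorial : ℝ) *
        ((∏ j ∈ Finset.range N, (j.factorial : ℝ)) * Real.sqrt (2 * π) ^ N)))
      = (((2:ℝ)^K)⁻¹ * (Real.sqrt 2 ^ N)⁻¹) * (Real.sqrt (2 * π) ^ N) *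
        ((N.factorial : ℝ) * ∏ j ∈ Finset.range N, (j.factorial : ℝ)) := by ring
    _ = (2 * π) ^ ((N : ℝ) / 2) * (2 : ℝ) ^ (-((N : ℝ) ^ 2) / 2) *
        ∏ j ∈ Finset.Icc 1 N, (Nat.factorial j : ℝ) := by
        rw [hpow2, hsqrtpow, hprod]
        ring

end GUEaux

noncomputable def GUEIntegral (N : ℕ) (u : ℝ) : ℝ :=
  ∫ y in Set.univ.pi (fun _ : Fin N => Set.Ioo (-u) u),
    Real.exp (-∑ j, y j ^ 2) *
      ∏ p ∈ Finset.univ.filter (fun p : Fin N × Fin N => p.1 < p.2), (y p.1 - y p.2) ^ 2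

theorem gue_integral_monotone_and_bounded (N : ℕ) (hN : 1 ≤ N) :
    MonotoneOn (GUEIntegral N) (Set.Ioi 0) ∧
    (∀ u > (0 : ℝ), GUEIntegral N u ≤
      (2 * π) ^ ((N : ℝ) / 2) * (2 : ℝ) ^ (-((N : ℝ) ^ 2) / 2) *
        ∏ j ∈ Finset.Icc 1 N, (Nat.factorial j : ℝ)) ∧
    (∫ y : Fin N → ℝ,
        Real.exp (-∑ j, y j ^ 2) *
          ∏ p ∈ Finset.univ.filter (fun p : Fin N × Fin N => p.1 < p.2), (y p.1 - y p.2) ^ 2) =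
      (2 * π) ^ ((N : ℝ) / 2) * (2 : ℝ) ^ (-((N : ℝ) ^ 2) / 2) *
        ∏ j ∈ Finset.Icc 1 N, (Nat.factorial j : ℝ) := by
  have hint := GUEaux.F_integrable N
  have hnn : ∀ y : Fin N → ℝ, 0 ≤ Real.exp (-∑ j, y j ^ 2) *
      ∏ p ∈ Finset.univ.filter (fun p : Fin N × Fin N => p.1 < p.2), (y p.1 - y p.2) ^ 2 :=
    GUEaux.F_nonneg N
  have hval := GUEaux.F_integral N hN
  refine ⟨?_, ?_, hval⟩
  · intro u hu v hv huv
    unfold GUEIntegral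
    refine MeasureTheory.setIntegral_mono_set hint.integrableOn
      (Filter.Eventually.of_forall hnn) ?_
    refine (HasSubset.Subset.eventuallyLE ?_)
    exact Set.pi_mono fun i _ => Set.Ioo_subset_Ioo (neg_le_neg huv) huv
  · intro u hu
    rw [← hval]
    unfold GUEIntegral
    exact MeasureTheory.setIntegral_le_integral hint (Filter.Eventually.of_forall hnn)
end

section
/- Let γ > 0, N ≥ 1, and z_u(γ) = (1/𝒩_C) ∫_{(-π,π]^N} exp(-2γ Σⱼ (1 - cos λⱼ)) Π_{j<k}|e^{iλⱼ} - e^{iλ_k}|² d^N λ, with 𝒩_C = (2π)^N N!. Then z_u(γ) ≤ γ^{-N²/2} (π/2)^{N²} 𝒩_G / 𝒩_C, where 𝒩_G = (2π)^{N/2} 2^{-N²/2} Π_{j=1}^{N} j! is the GUE normalization constant. -/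
open Real MeasureTheory Finset

section Hermite1D
open Polynomial

noncomputable def gauss : ℝ → ℝ := fun x => Real.exp (-(x^2/2))

lemma gauss_eq (x : ℝ) : gauss x = Real.exp (-(1/2) * x^2) := by
  simp [gauss]; ring_nf

lemma integrable_pow_gauss (n : ℕ) : Integrable fun x : ℝ => x^n * gauss x := by
  have h := integrable_rpow_mul_exp_neg_mul_sq (b := 1/2) (by norm_num)
    (s := (n : ℝ)) (by exact_mod_cast neg_one_lt_zero.trans_le n.cast_nonneg)
  simp_rw [gauss_eq]
  simp_rw [Real.rpow_natCast] at h
  exact h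

lemma integrable_poly_gauss (p : ℝ[X]) : Integrable fun x : ℝ => aeval x p * gauss x := by
  have : (fun x : ℝ => aeval x p * gauss x)
      = fun x => ∑ i ∈ range (p.natDegree + 1), p.coeff i * (x ^ i * gauss x) := by
    funext x
    rw [aeval_eq_sum_range, Finset.sum_mul]
    simp [smul_eq_mul, mul_assoc]
  rw [this]
  exact integrable_finset_sum _ fun i _ => (integrable_pow_gauss i).const_mul _

lemma hasDerivAt_gauss (x : ℝ) : HasDerivAt gauss (-x * gauss x) x := by
  have h : HasDerivAt (fun y : ℝ => -(y^2/2)) (-x) x := by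
    have := (hasDerivAt_pow 2 x).div_const 2
    exact this.neg.congr_deriv (by simp)
  have := h.exp
  unfold gauss
  simpa [mul_comm] using this

lemma hasDerivAt_aeval_int (q : ℤ[X]) (x : ℝ) :
    HasDerivAt (fun y : ℝ => (aeval y q : ℝ)) (aeval x (derivative q)) x := by
  have e : ∀ y : ℝ, (aeval y q : ℝ) = eval y (q.map (algebraMap ℤ ℝ)) := fun y => by
    rw [aeval_def, eval₂_eq_eval_map]
  have e' : (aeval x (derivative q) : ℝ) = eval x (derivative (q.map (algebraMap ℤ ℝ))) := by
    rw [derivative_map, aeval_def, eval₂_eq_eval_map]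
  simp only [e, e']
  exact Polynomial.hasDerivAt _ x

noncomputable def HF (n : ℕ) : ℝ → ℝ := fun x => aeval x (hermite n) * gauss x

lemma hasDerivAt_HF (n : ℕ) (x : ℝ) : HasDerivAt (HF n) (-(HF (n+1) x)) x := by
  have h := (hasDerivAt_aeval_int (hermite n) x).mul (hasDerivAt_gauss x)
  have e : aeval x (derivative (hermite n)) * gauss x + aeval x (hermite n) * (-x * gauss x)
      = -(HF (n+1) x) := by
    rw [HF, hermite_succ]
    simp only [map_sub, map_mul, aeval_X]
    ring
  rwa [e] at h

lemma integrable_poly_HF (r : ℝ[X]) (n : ℕ) :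
    Integrable fun x : ℝ => aeval x r * HF n x := by
  have : (fun x : ℝ => aeval x r * HF n x)
      = fun x => aeval x (r * (hermite n).map (algebraMap ℤ ℝ)) * gauss x := by
    funext x
    simp only [HF, map_mul, aeval_map_algebraMap]
    ring
  rw [this]
  exact integrable_poly_gauss _

lemma ibp_step (p : ℝ[X]) (n : ℕ) :
    ∫ x : ℝ, aeval x p * HF (n+1) x = ∫ x : ℝ, aeval x (derivative p) * HF n x := by
  have h := integral_mul_deriv_eq_deriv_mul_of_integrable
    (u := fun x : ℝ => (aeval x p : ℝ)) (u' := fun x => aeval x (derivative p))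
    (v := HF n) (v' := fun x => -(HF (n+1) x))
    (fun x _ => by
      simpa [Polynomial.aeval_def, Polynomial.eval₂_eq_eval_map] using
        Polynomial.hasDerivAt (p.map (algebraMap ℝ ℝ)) x)
    (fun x _ => hasDerivAt_HF n x)
    ?_ ?_ ?_
  · simp only [Pi.mul_apply, mul_neg] at h
    rw [integral_neg] at h
    have h2 := neg_injective h
    simpa using h2
  · have := (integrable_poly_HF p (n+1)).neg
    refine this.congr (Filter.Eventually.of_forall fun x => ?_)
    simp [Pi.mul_apply]
  · exact (integrable_poly_HF (derivative p) n).congr (Filter.Eventually.of_forall fun x => rfl)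
  · exact (integrable_poly_HF p n).congr (Filter.Eventually.of_forall fun x => rfl)

lemma integral_poly_HF_eq (p : ℝ[X]) (n : ℕ) :
    ∫ x : ℝ, aeval x p * HF n x = ∫ x : ℝ, aeval x (derivative^[n] p) * gauss x := by
  induction n generalizing p with
  | zero => simp [HF, hermite_zero]
  | succ n ih =>
      rw [ibp_step p n, ih (derivative p)]
      rw [← Function.iterate_succ_apply]

lemma integral_gauss_val : ∫ x : ℝ, gauss x = Real.sqrt (2*π) := by
  have h := integral_gaussian (1/2)
  have e : (fun x : ℝ => Real.exp (-(1/2) * x^2)) = gauss := by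
    funext x; simp [gauss]; ring_nf
  rw [e] at h
  rw [h, show π/(1/2) = 2*π by ring]

lemma iterate_derivative_hermite_self (n : ℕ) :
    derivative^[n] ((hermite n).map (algebraMap ℤ ℝ)) = C (Nat.factorial n : ℝ) := by
  set q : ℝ[X] := (hermite n).map (algebraMap ℤ ℝ) with hq
  have hmonic : q.Monic := (hermite_monic n).map _
  have hdeg : q.natDegree = n := by
    rw [hq, (hermite_monic n).natDegree_map, natDegree_hermite]
  have hXn : derivative^[n] (X^n : ℝ[X]) = C (Nat.factorial n : ℝ) := by
    rw [iterate_derivative_X_pow_eq_C_mul]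
    simp [Nat.descFactorial_self]
  have hrest : derivative^[n] ((X:ℝ[X])^n - q) = 0 := by
    rcases eq_or_ne ((X:ℝ[X])^n - q) 0 with h0 | h0
    · simp [h0]
    · refine iterate_derivative_eq_zero ?_
      rw [natDegree_lt_iff_degree_lt h0]
      have := Polynomial.degree_sub_lt (p := (X:ℝ[X])^n) (q := q) ?_
        (pow_ne_zero _ X_ne_zero) ?_
      · rwa [degree_X_pow] at this
      · rw [degree_eq_natDegree hmonic.ne_zero, hdeg, degree_X_pow]
      · rw [hmonic.leadingCoeff, (monic_X_pow n).leadingCoeff]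
  have hq2 : q = X^n - ((X:ℝ[X])^n - q) := by ring
  rw [hq2, Polynomial.iterate_derivative_sub, hXn, hrest, sub_zero]

lemma gram_le (m n : ℕ) (h : m ≤ n) :
    ∫ x : ℝ, aeval x (hermite m) * HF n x
      = (if m = n then (Nat.factorial n : ℝ) else 0) * Real.sqrt (2*π) := by
  have e : (fun x : ℝ => aeval x (hermite m) * HF n x)
      = fun x => aeval x ((hermite m).map (algebraMap ℤ ℝ)) * HF n x := by
    funext x; rw [aeval_map_algebraMap]
  rw [show (∫ x : ℝ, aeval x (hermite m) * HF n x)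
      = ∫ x : ℝ, aeval x ((hermite m).map (algebraMap ℤ ℝ)) * HF n x by rw [e]]
  rw [integral_poly_HF_eq]
  rcases lt_or_eq_of_le h with hlt | rfl
  · have hz : derivative^[n] ((hermite m).map (algebraMap ℤ ℝ)) = 0 := by
      refine iterate_derivative_eq_zero ?_
      rw [(hermite_monic m).natDegree_map, natDegree_hermite]
      exact hlt
    rw [hz]
    simp [if_neg hlt.ne]
  · rw [iterate_derivative_hermite_self]
    simp only [if_pos rfl]
    rw [← integral_gauss_val, ← integral_const_mul]
    congr 1
    funext x
    rw [aeval_C]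
    simp

lemma gram (m n : ℕ) :
    ∫ x : ℝ, aeval x (hermite m) * aeval x (hermite n) * gauss x
      = (if m = n then (Nat.factorial m : ℝ) else 0) * Real.sqrt (2*π) := by
  rcases le_total m n with h | h
  · have := gram_le m n h
    simp only [HF, ← mul_assoc] at this
    rw [this]
    by_cases hmn : m = n <;> simp [hmn]
  · have := gram_le n m h
    simp only [HF, ← mul_assoc] at this
    rw [show (fun x : ℝ => aeval x (hermite m) * aeval x (hermite n) * gauss x)
        = fun x : ℝ => aeval x (hermite n) * aeval x (hermite m) * gauss x by
      funext x; ring] at *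
    rw [this]
    by_cases hmn : m = n <;> simp [hmn, eq_comm]

end Hermite1D

section MehtaND
open Polynomial

lemma aeval_int_eq (p : ℤ[X]) (x : ℝ) :
    aeval x p = eval x (p.map (Int.castRingHom ℝ)) := by
  rw [aeval_def, eval₂_eq_eval_map, algebraMap_int_eq]

lemma prod_pairs {M : Type*} [CommMonoid M] (N : ℕ) (f : Fin N → Fin N → M) :
    ∏ i, ∏ j ∈ Ioi i, f i j
      = ∏ p ∈ univ.filter (fun p : Fin N × Fin N => p.1 < p.2), f p.1 p.2 := by
  rw [Finset.prod_sigma']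
  refine Finset.prod_nbij' (fun p => (p.1, p.2)) (fun p => ⟨p.1, p.2⟩) ?_ ?_ ?_ ?_ ?_ <;>
    simp [Finset.mem_sigma, Finset.mem_Ioi, Finset.mem_filter]

lemma integrable_ff (a b : ℕ) :
    Integrable fun x : ℝ => aeval x (hermite a) * aeval x (hermite b) * gauss x := by
  have e : (fun x : ℝ => aeval x (hermite a) * aeval x (hermite b) * gauss x)
      = fun x => aeval x ((hermite a * hermite b : ℤ[X]).map (algebraMap ℤ ℝ)) * gauss x := by
    funext x
    rw [aeval_map_algebraMap, map_mul]
  rw [e]; exact integrable_poly_gauss _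

noncomputable def Tfun {N : ℕ} (σ τ : Equiv.Perm (Fin N)) : (Fin N → ℝ) → ℝ := fun y =>
  (((Equiv.Perm.sign σ : ℤ) : ℝ) * ((Equiv.Perm.sign τ : ℤ) : ℝ))
    * ∏ i, (aeval (y i) (hermite (σ i : ℕ)) * aeval (y i) (hermite (τ i : ℕ)) * gauss (y i))

lemma Tfun_integrable {N : ℕ} (σ τ : Equiv.Perm (Fin N)) : Integrable (Tfun σ τ) := by
  unfold Tfun
  exact (Integrable.fin_nat_prod (fun i => integrable_ff (σ i : ℕ) (τ i : ℕ))).const_mul _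

lemma mehta_fun_eq (N : ℕ) :
    (fun y : Fin N → ℝ =>
      (∏ p ∈ univ.filter (fun p : Fin N × Fin N => p.1 < p.2), (y p.1 - y p.2)^2)
        * ∏ i, gauss (y i))
    = fun y => ∑ σ : Equiv.Perm (Fin N), ∑ τ : Equiv.Perm (Fin N), Tfun σ τ y := by
  funext y
  have hdet : (Matrix.vandermonde y).det
      = ∑ σ : Equiv.Perm (Fin N), ((Equiv.Perm.sign σ : ℤ) : ℝ)
          * ∏ i, aeval (y i) (hermite (σ i : ℕ)) := by
    rw [Matrix.det_eval_matrixOfPolynomials_eq_det_vandermonde y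
      (fun j => (hermite (j : ℕ)).map (algebraMap ℤ ℝ))
      (fun j => by rw [(hermite_monic _).natDegree_map, natDegree_hermite])
      (fun j => (hermite_monic _).map _)]
    rw [← Matrix.det_transpose, Matrix.det_apply']
    refine Finset.sum_congr rfl fun σ _ => ?_
    congr 1
    refine Finset.prod_congr rfl fun i _ => ?_
    rw [Matrix.transpose_apply, Matrix.of_apply, aeval_int_eq, algebraMap_int_eq]
  have hvs : (∏ p ∈ univ.filter (fun p : Fin N × Fin N => p.1 < p.2), (y p.1 - y p.2)^2)
      = (Matrix.vandermonde y).det ^ 2 := by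
    rw [Matrix.det_vandermonde]
    simp_rw [← Finset.prod_pow]
    rw [prod_pairs]
    exact Finset.prod_congr rfl fun p _ => by ring
  rw [hvs, hdet, sq, Finset.sum_mul_sum, Finset.sum_mul]
  refine Finset.sum_congr rfl fun σ _ => ?_
  rw [Finset.sum_mul]
  refine Finset.sum_congr rfl fun τ _ => ?_
  have hp : ∏ i, (aeval (y i) (hermite (σ i : ℕ)) * aeval (y i) (hermite (τ i : ℕ))
      * gauss (y i))
      = (∏ i, aeval (y i) (hermite (σ i : ℕ))) * (∏ i, aeval (y i) (hermite (τ i : ℕ)))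
        * ∏ i, gauss (y i) := by
    rw [Finset.prod_mul_distrib, Finset.prod_mul_distrib]
  unfold Tfun
  rw [hp]
  ring

lemma integrable_mehta (N : ℕ) :
    Integrable (fun y : Fin N → ℝ =>
      (∏ p ∈ univ.filter (fun p : Fin N × Fin N => p.1 < p.2), (y p.1 - y p.2)^2)
        * ∏ i, gauss (y i)) := by
  rw [mehta_fun_eq]
  exact integrable_finset_sum _ fun σ _ => integrable_finset_sum _ fun τ _ =>
    Tfun_integrable σ τ

lemma mehta (N : ℕ) :
    ∫ y : Fin N → ℝ,
      (∏ p ∈ univ.filter (fun p : Fin N × Fin N => p.1 < p.2), (y p.1 - y p.2)^2)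
        * ∏ i, gauss (y i)
    = Real.sqrt (2*π) ^ N * ((Nat.factorial N : ℝ)
        * ∏ i : Fin N, (Nat.factorial (i : ℕ) : ℝ)) := by
  classical
  rw [show (fun y : Fin N → ℝ =>
      (∏ p ∈ univ.filter (fun p : Fin N × Fin N => p.1 < p.2), (y p.1 - y p.2)^2)
        * ∏ i, gauss (y i)) = fun y => ∑ σ : Equiv.Perm (Fin N), ∑ τ, Tfun σ τ y from
    mehta_fun_eq N]
  rw [integral_finset_sum _ (fun σ _ => integrable_finset_sum _ fun τ _ => Tfun_integrable σ τ)]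
  have hTval : ∀ σ τ : Equiv.Perm (Fin N), ∫ y : Fin N → ℝ, Tfun σ τ y
      = (((Equiv.Perm.sign σ : ℤ) : ℝ) * ((Equiv.Perm.sign τ : ℤ) : ℝ))
        * ∏ i, ((if (σ i : ℕ) = (τ i : ℕ) then
          (Nat.factorial (σ i : ℕ) : ℝ) else 0) * Real.sqrt (2*π)) := by
    intro σ τ
    unfold Tfun
    rw [integral_const_mul, MeasureTheory.integral_fintype_prod_volume_eq_prod (𝕜 := ℝ)
      (f := fun i x => aeval x (hermite (σ i : ℕ)) * aeval x (hermite (τ i : ℕ)) * gauss x)]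
    congr 1
    exact Finset.prod_congr rfl fun i _ => gram _ _
  have hstep : ∀ σ : Equiv.Perm (Fin N), (∑ τ : Equiv.Perm (Fin N), ∫ y : Fin N → ℝ, Tfun σ τ y)
      = Real.sqrt (2*π) ^ N * ∏ i : Fin N, (Nat.factorial (i : ℕ) : ℝ) := by
    intro σ
    rw [Finset.sum_eq_single σ]
    · rw [hTval σ σ]
      have h1 : ((Equiv.Perm.sign σ : ℤ) : ℝ) * ((Equiv.Perm.sign σ : ℤ) : ℝ) = 1 := by
        rcases Int.units_eq_one_or (Equiv.Perm.sign σ) with h | h <;> simp [h]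
      simp only [eq_self_iff_true, if_true]
      rw [h1, one_mul, Finset.prod_mul_distrib, Finset.prod_const, Finset.card_univ,
        Fintype.card_fin,
        Equiv.prod_comp σ (fun i : Fin N => (Nat.factorial (i : ℕ) : ℝ))]
      ring
    · intro τ _ hτ
      rw [hTval σ τ]
      have : ∃ i, σ i ≠ τ i := by
        by_contra hc
        push_neg at hc
        exact hτ (Equiv.ext hc).symm
      obtain ⟨i, hi⟩ := this
      have hzero : ((if (σ i : ℕ) = (τ i : ℕ) then (Nat.factorial (σ i : ℕ) : ℝ) else 0)
          * Real.sqrt (2*π)) = 0 := by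
        rw [if_neg (fun h => hi (Fin.ext h)), zero_mul]
      rw [Finset.prod_eq_zero (Finset.mem_univ i) hzero, mul_zero]
    · intro h; exact absurd (Finset.mem_univ σ) h
  calc (∑ σ : Equiv.Perm (Fin N), ∫ y : Fin N → ℝ, ∑ τ, Tfun σ τ y)
      = ∑ σ : Equiv.Perm (Fin N),
          Real.sqrt (2*π) ^ N * ∏ i : Fin N, (Nat.factorial (i : ℕ) : ℝ) := by
        refine Finset.sum_congr rfl fun σ _ => ?_
        rw [integral_finset_sum _ fun τ _ => Tfun_integrable σ τ]
        exact hstep σ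
    _ = Real.sqrt (2*π) ^ N * ((Nat.factorial N : ℝ)
        * ∏ i : Fin N, (Nat.factorial (i : ℕ) : ℝ)) := by
        rw [Finset.sum_const, Finset.card_univ, Fintype.card_perm, Fintype.card_fin,
          nsmul_eq_mul]
        ring

end MehtaND

section Bounds

lemma sin_sq_half' (x : ℝ) : Real.sin (x/2)^2 = (1 - Real.cos x)/2 := by
  have h := Real.abs_sin_half x
  have h2 : 0 ≤ (1 - Real.cos x)/2 := by
    have := Real.cos_le_one x; linarith
  calc Real.sin (x/2)^2 = |Real.sin (x/2)|^2 := (sq_abs _).symm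
    _ = Real.sqrt ((1 - Real.cos x)/2)^2 := by rw [h]
    _ = (1 - Real.cos x)/2 := Real.sq_sqrt h2

lemma jordan_bound {x : ℝ} (hx : |x| ≤ π) : 2*x^2/π^2 ≤ 1 - Real.cos x := by
  have hπ : (0:ℝ) < π := Real.pi_pos
  have h1 : 2/π * |x/2| ≤ |Real.sin (x/2)| := by
    apply Real.mul_abs_le_abs_sin
    rw [abs_div]
    rw [abs_of_pos (by norm_num : (0:ℝ) < 2)]
    linarith [hx]
  have h2 : (2/π * |x/2|)^2 ≤ |Real.sin (x/2)|^2 := by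
    apply pow_le_pow_left₀ (by positivity) h1
  rw [sq_abs, sin_sq_half'] at h2
  have h3 : (2/π * |x/2|)^2 = x^2/π^2 := by
    rw [abs_div, abs_of_pos (by norm_num : (0:ℝ) < 2), mul_pow, div_pow, div_pow, sq_abs]
    field_simp
  rw [h3] at h2
  have h4 : 2*x^2/π^2 = 2*(x^2/π^2) := by ring
  rw [h4]
  linarith

lemma abs_exp_sub_sq (a b : ℝ) :
    ‖Complex.exp (Complex.I*a) - Complex.exp (Complex.I*b)‖^2
      = 2 - 2*Real.cos (a-b) := by
  rw [show Complex.I*(a:ℂ) = (a:ℂ)*Complex.I by ring,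
      show Complex.I*(b:ℂ) = (b:ℂ)*Complex.I by ring,
      Complex.exp_mul_I, Complex.exp_mul_I, Complex.sq_norm]
  simp only [Complex.normSq_apply, Complex.sub_re, Complex.sub_im, Complex.add_re,
    Complex.add_im, Complex.mul_re, Complex.mul_im, Complex.I_re, Complex.I_im,
    Complex.cos_ofReal_re, Complex.cos_ofReal_im, Complex.sin_ofReal_re, Complex.sin_ofReal_im]
  rw [Real.cos_sub]
  nlinarith [Real.sin_sq_add_cos_sq a, Real.sin_sq_add_cos_sq b]

lemma two_sub_cos_le (t : ℝ) : 2 - 2*Real.cos t ≤ t^2 := by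
  have h := sin_sq_half' t
  have h2 : Real.sin (t/2)^2 ≤ (t/2)^2 := Real.sin_sq_le_sq
  rw [h] at h2
  nlinarith

lemma card_pairs (N : ℕ) :
    2 * (univ.filter (fun p : Fin N × Fin N => p.1 < p.2)).card = N^2 - N := by
  classical
  set P := univ.filter (fun p : Fin N × Fin N => p.1 < p.2) with hP
  set Q := univ.filter (fun p : Fin N × Fin N => p.2 < p.1) with hQ
  have hcard : P.card = Q.card := by
    refine Finset.card_bij (fun p _ => p.swap) ?_ ?_ ?_
    · intro p hp
      simp only [hP, mem_filter, mem_univ, true_and] at hp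
      simp only [hQ, mem_filter, mem_univ, true_and, Prod.snd_swap, Prod.fst_swap]
      exact hp
    · intro p _ q _ h
      exact Prod.swap_injective h
    · intro q hq
      simp only [hQ, mem_filter, mem_univ, true_and] at hq
      exact ⟨q.swap, by simp [hP, hq], by simp⟩
  have hunion : (univ : Finset (Fin N)).offDiag = P ∪ Q := by
    ext p
    simp only [Finset.mem_offDiag, mem_union, hP, hQ, mem_filter, mem_univ, true_and]
    constructor
    · intro h
      exact lt_or_gt_of_ne h
    · intro h
      cases h with
      | inl h => exact h.ne
      | inr h => exact h.ne'
  have hdisj : Disjoint P Q := by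
    rw [Finset.disjoint_left]
    intro p hp hq
    simp only [hP, hQ, mem_filter, mem_univ, true_and] at hp hq
    exact absurd (hp.trans hq) (lt_irrefl _)
  have hoff := Finset.offDiag_card (univ : Finset (Fin N))
  rw [hunion, Finset.card_union_of_disjoint hdisj, ← hcard, Finset.card_univ,
    Fintype.card_fin, show N*N = N^2 from (sq N).symm] at hoff
  omega

lemma fact_prod_real (N : ℕ) :
    (Nat.factorial N : ℝ) * ∏ i : Fin N, (Nat.factorial (i : ℕ) : ℝ)
      = ∏ j ∈ Finset.Icc 1 N, (Nat.factorial j : ℝ) := by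
  induction N with
  | zero => simp
  | succ n ih =>
      rw [Fin.prod_univ_castSucc]
      simp only [Fin.coe_castSucc, Fin.val_last]
      rw [Finset.prod_Icc_succ_top (Nat.one_le_iff_ne_zero.mpr (Nat.succ_ne_zero n)), ← ih]
      rw [Nat.factorial_succ]
      push_cast
      ring

lemma const_eq (N : ℕ) (γ : ℝ) (hγ : 0 < γ) :
    ((2 * Real.sqrt (2*γ) / π) ^ (N^2))⁻¹ * Real.sqrt (2*π) ^ N
      = γ ^ (-((N : ℝ) ^ 2) / 2) * (π / 2) ^ (N ^ 2) *
        ((2 * π) ^ ((N : ℝ) / 2) * (2 : ℝ) ^ (-((N : ℝ) ^ 2) / 2)) := by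
  have hπ := Real.pi_pos
  have h2π : (0:ℝ) < 2*π := by linarith
  have e1 : (2*π) ^ ((N:ℝ)/2) = Real.sqrt (2*π) ^ N := by
    rw [Real.sqrt_eq_rpow, ← Real.rpow_natCast ((2*π)^((1:ℝ)/2)) N, ← Real.rpow_mul h2π.le]
    congr 1
    ring
  have e2 : γ ^ (-((N:ℝ)^2)/2) = (Real.sqrt γ ^ (N^2))⁻¹ := by
    rw [Real.sqrt_eq_rpow, ← Real.rpow_natCast (γ^((1:ℝ)/2)) (N^2), ← Real.rpow_mul hγ.le,
      ← Real.rpow_neg hγ.le]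
    congr 1
    push_cast
    ring
  have e3 : (2:ℝ) ^ (-((N:ℝ)^2)/2) = (Real.sqrt 2 ^ (N^2))⁻¹ := by
    rw [Real.sqrt_eq_rpow, ← Real.rpow_natCast ((2:ℝ)^((1:ℝ)/2)) (N^2),
      ← Real.rpow_mul (by norm_num : (0:ℝ) ≤ 2),
      ← Real.rpow_neg (by norm_num : (0:ℝ) ≤ 2)]
    congr 1
    push_cast
    ring
  rw [e1, e2, e3]
  have hsγ : 0 < Real.sqrt γ := Real.sqrt_pos.mpr hγ
  have hs2 : 0 < Real.sqrt 2 := Real.sqrt_pos.mpr (by norm_num)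
  have hb : ((Real.sqrt γ)⁻¹ * (π/2) * (Real.sqrt 2)⁻¹) = (2 * Real.sqrt (2*γ) / π)⁻¹ := by
    rw [Real.sqrt_mul (by norm_num : (0:ℝ) ≤ 2) γ]
    rw [inv_div]
    field_simp
  have key : ((2 * Real.sqrt (2*γ) / π) ^ (N^2))⁻¹
      = (Real.sqrt γ ^ (N^2))⁻¹ * (π/2)^(N^2) * (Real.sqrt 2 ^ (N^2))⁻¹ := by
    rw [← inv_pow, ← inv_pow, ← inv_pow, ← mul_pow, ← mul_pow, hb]
  rw [key]
  ring

end Bounds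

theorem zu_upper_bound (N : ℕ) (hN : 1 ≤ N) (γ : ℝ) (hγ : 0 < γ) :
    (1 / ((2 * π) ^ N * (Nat.factorial N : ℝ))) *
      (∫ lam in Set.univ.pi (fun _ : Fin N => Set.Ioc (-π) π),
        Real.exp (-2 * γ * ∑ j, (1 - Real.cos (lam j))) *
          ∏ p ∈ Finset.univ.filter (fun p : Fin N × Fin N => p.1 < p.2),
            ‖Complex.exp (Complex.I * lam p.1) -
              Complex.exp (Complex.I * lam p.2)‖ ^ 2) ≤
    γ ^ (-((N : ℝ) ^ 2) / 2) * (π / 2) ^ (N ^ 2) *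
      ((2 * π) ^ ((N : ℝ) / 2) * (2 : ℝ) ^ (-((N : ℝ) ^ 2) / 2) *
        ∏ j ∈ Finset.Icc 1 N, (Nat.factorial j : ℝ)) /
      ((2 * π) ^ N * (Nat.factorial N : ℝ)) := by
  have hπ := Real.pi_pos
  set s : ℝ := 2 * Real.sqrt (2*γ) / π with hs_def
  have hsq : 0 < Real.sqrt (2*γ) := Real.sqrt_pos.mpr (by linarith)
  have hs : 0 < s := by rw [hs_def]; positivity
  have hs2 : s^2 = 8*γ/π^2 := by
    rw [hs_def, div_pow, mul_pow, Real.sq_sqrt (by linarith : (0:ℝ) ≤ 2*γ)]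
    ring
  set P : Finset (Fin N × Fin N) := Finset.univ.filter (fun p : Fin N × Fin N => p.1 < p.2)
    with hP
  set box : Set (Fin N → ℝ) := Set.univ.pi (fun _ : Fin N => Set.Ioc (-π) π) with hbox
  set f : (Fin N → ℝ) → ℝ := fun lam =>
    Real.exp (-2 * γ * ∑ j, (1 - Real.cos (lam j))) *
      ∏ p ∈ P, ‖Complex.exp (Complex.I * lam p.1) -
        Complex.exp (Complex.I * lam p.2)‖ ^ 2 with hf
  set F : (Fin N → ℝ) → ℝ := fun y => (∏ p ∈ P, (y p.1 - y p.2)^2) * ∏ i, gauss (y i) with hF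
  set B : (Fin N → ℝ) → ℝ := fun lam =>
    (∏ p ∈ P, (lam p.1 - lam p.2)^2) * ∏ i, gauss (s * lam i) with hB
  -- pointwise bound on the box
  have hfB : ∀ lam ∈ box, f lam ≤ B lam := by
    intro lam hl
    have hmem : ∀ i, lam i ∈ Set.Ioc (-π) π := fun i => hl i (Set.mem_univ i)
    have habs : ∀ i, |lam i| ≤ π := fun i => abs_le.mpr ⟨(hmem i).1.le, (hmem i).2⟩
    have h1 : Real.exp (-2 * γ * ∑ j, (1 - Real.cos (lam j))) ≤ ∏ i, gauss (s * lam i) := by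
      have e : ∏ i, gauss (s * lam i) = Real.exp (∑ i, -((s * lam i)^2/2)) := by
        rw [Real.exp_sum]
        exact Finset.prod_congr rfl fun i _ => rfl
      rw [e, Real.exp_le_exp, show (-2 * γ * ∑ j, (1 - Real.cos (lam j)))
          = ∑ j, -(2 * γ * (1 - Real.cos (lam j))) by
        rw [Finset.mul_sum]; exact Finset.sum_congr rfl fun i _ => by ring]
      refine Finset.sum_le_sum fun i _ => ?_
      have hj := jordan_bound (habs i)
      have e2 : (s * lam i)^2/2 = 2*γ*(2*(lam i)^2/π^2) := by
        rw [mul_pow, hs2]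
        field_simp
        ring
      rw [neg_le_neg_iff, e2]
      exact mul_le_mul_of_nonneg_left hj (by linarith)
    have h2 : (∏ p ∈ P, ‖Complex.exp (Complex.I * lam p.1) -
          Complex.exp (Complex.I * lam p.2)‖ ^ 2)
        ≤ ∏ p ∈ P, (lam p.1 - lam p.2)^2 := by
      refine Finset.prod_le_prod (fun p _ => by positivity) (fun p _ => ?_)
      rw [abs_exp_sub_sq]
      exact two_sub_cos_le _
    have hmul := mul_le_mul h1 h2 (Finset.prod_nonneg fun p _ => by positivity)
      (Finset.prod_nonneg fun i _ => (Real.exp_pos _).le)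
    calc f lam = Real.exp (-2 * γ * ∑ j, (1 - Real.cos (lam j))) *
          ∏ p ∈ P, ‖Complex.exp (Complex.I * lam p.1) -
            Complex.exp (Complex.I * lam p.2)‖ ^ 2 := rfl
      _ ≤ (∏ i, gauss (s * lam i)) * ∏ p ∈ P, (lam p.1 - lam p.2)^2 := hmul
      _ = B lam := by rw [hB]; ring
  -- integrability of f on the box
  have hfc : Continuous f := by
    rw [hf]
    refine Continuous.mul ?_ ?_
    · exact Real.continuous_exp.comp (continuous_const.mul
        (continuous_finset_sum _ fun i _ =>
          continuous_const.sub (Real.continuous_cos.comp (continuous_apply i))))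
    · refine continuous_finset_prod _ fun p _ => ?_
      refine Continuous.pow ?_ 2
      refine continuous_norm.comp ?_
      refine Continuous.sub ?_ ?_
      · exact Complex.continuous_exp.comp (continuous_const.mul
          (Complex.continuous_ofReal.comp (continuous_apply p.1)))
      · exact Complex.continuous_exp.comp (continuous_const.mul
          (Complex.continuous_ofReal.comp (continuous_apply p.2)))
  have hf_int : IntegrableOn f box := by
    have hcomp : IsCompact (Set.univ.pi (fun _ : Fin N => Set.Icc (-π) π)) :=
      isCompact_univ_pi fun _ => isCompact_Icc
    have h1 : IntegrableOn f (Set.univ.pi (fun _ : Fin N => Set.Icc (-π) π)) :=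
      hfc.continuousOn.integrableOn_compact hcomp
    exact h1.mono_set (Set.pi_mono fun i _ => Set.Ioc_subset_Icc_self)
  -- relation between B and F
  have hBeq : ∀ lam, F (s • lam) = s^(2*P.card) * B lam := by
    intro lam
    simp only [hF, hB, Pi.smul_apply, smul_eq_mul]
    rw [show ∏ p ∈ P, (s*lam p.1 - s*lam p.2)^2 = ∏ p ∈ P, s^2*(lam p.1 - lam p.2)^2 from
      Finset.prod_congr rfl fun p _ => by ring]
    rw [Finset.prod_mul_distrib, Finset.prod_const, ← pow_mul]
    ring
  have hF_int : Integrable F := integrable_mehta N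
  have hcomp_int : Integrable (fun lam : Fin N → ℝ => F (s • lam)) :=
    (integrable_comp_smul_iff volume F hs.ne').mpr hF_int
  have hB_int : Integrable B := by
    have h2 := hcomp_int.const_mul ((s^(2*P.card))⁻¹)
    refine h2.congr (Filter.Eventually.of_forall fun lam => ?_)
    show (s^(2*P.card))⁻¹ * F (s • lam) = B lam
    rw [hBeq lam]
    field_simp
  -- chain of inequalities
  have I1 : ∫ lam in box, f lam ≤ ∫ lam in box, B lam :=
    setIntegral_mono_on hf_int hB_int.integrableOn
      (MeasurableSet.univ_pi fun _ => measurableSet_Ioc) hfB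
  have I2 : ∫ lam in box, B lam ≤ ∫ lam, B lam := by
    refine setIntegral_le_integral hB_int (Filter.Eventually.of_forall fun lam => ?_)
    rw [hB]
    exact mul_nonneg (Finset.prod_nonneg fun p _ => sq_nonneg _)
      (Finset.prod_nonneg fun i _ => (Real.exp_pos _).le)
  have hNpow : 2*P.card + N = N^2 := by
    have h1 := card_pairs N
    have h2 : N ≤ N^2 := Nat.le_self_pow two_ne_zero N
    rw [hP]
    omega
  have I3 : ∫ lam, B lam = (s^(N^2))⁻¹ * (Real.sqrt (2*π) ^ N * ((Nat.factorial N : ℝ)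
      * ∏ i : Fin N, (Nat.factorial (i : ℕ) : ℝ))) := by
    have e1 : ∀ lam, B lam = (s^(2*P.card))⁻¹ * F (s • lam) := by
      intro lam
      rw [hBeq lam]
      field_simp
    rw [show (fun lam => B lam) = fun lam => (s^(2*P.card))⁻¹ * F (s • lam) from
      funext e1]
    rw [integral_const_mul, Measure.integral_comp_smul volume F s, Module.finrank_fin_fun,
      abs_of_pos (by positivity : (0:ℝ) < (s^N)⁻¹), smul_eq_mul]
    rw [show (∫ y, F y) = Real.sqrt (2*π) ^ N * ((Nat.factorial N : ℝ)
      * ∏ i : Fin N, (Nat.factorial (i : ℕ) : ℝ)) from mehta N]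
    rw [← mul_assoc, ← inv_pow, ← inv_pow, ← pow_add, inv_pow, hNpow]
  -- final numeric assembly
  have hXpos : (0:ℝ) < (2*π)^N * (Nat.factorial N : ℝ) := by positivity
  rw [one_div, inv_mul_eq_div, div_le_div_iff₀ hXpos hXpos]
  have hfinal : (∫ lam in box, f lam) ≤ γ ^ (-((N : ℝ) ^ 2) / 2) * (π / 2) ^ (N ^ 2) *
      ((2 * π) ^ ((N : ℝ) / 2) * (2 : ℝ) ^ (-((N : ℝ) ^ 2) / 2) *
        ∏ j ∈ Finset.Icc 1 N, (Nat.factorial j : ℝ)) := by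
    refine le_trans (I1.trans I2) ?_
    rw [I3]
    rw [show (s^(N^2))⁻¹ * (Real.sqrt (2*π) ^ N * ((Nat.factorial N : ℝ)
        * ∏ i : Fin N, (Nat.factorial (i : ℕ) : ℝ)))
        = ((s^(N^2))⁻¹ * Real.sqrt (2*π) ^ N) * ((Nat.factorial N : ℝ)
        * ∏ i : Fin N, (Nat.factorial (i : ℕ) : ℝ)) by ring]
    rw [hs_def, const_eq N γ hγ, fact_prod_real N]
    ring_nf
    exact le_refl _
  calc (∫ lam in box, f lam) * ((2*π)^N * (Nat.factorial N : ℝ))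
      ≤ (γ ^ (-((N : ℝ) ^ 2) / 2) * (π / 2) ^ (N ^ 2) *
        ((2 * π) ^ ((N : ℝ) / 2) * (2 : ℝ) ^ (-((N : ℝ) ^ 2) / 2) *
        ∏ j ∈ Finset.Icc 1 N, (Nat.factorial j : ℝ))) * ((2*π)^N * (Nat.factorial N : ℝ)) :=
        mul_le_mul_of_nonneg_right hfinal hXpos.le
    _ = _ := by ring
end
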